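/- For n ≥ 1 and m ≥ 0 define F(n,m) = Σ_{j=0}^{n} a_{n−j}^{(n)}·b_{m+j}, and for n ≥ 1 and k ≥ 2 define H_k^{(n)} = Σ_{j=0}^{k} a_j^{(n)}·F(n−1, n+k−2−j) − Σ_{j=0}^{k−2} a_j^{(n−1)}·F(n, n+k−3−j). Then H_k^{(n)} = 0 for all n ≥ 1 and all k ≥ 2. -/

import Mathlib

open Finset

/-- `a_k^{(n)} = C(2n−k+1, 2n−2k+1) + C(2n−k, 2n−2k+1)` for `n ≥ 1` and `0 ≤ k ≤ n`,
with the conventions `a_0^{(0)} = 1` and `a_k^{(n)} = 0` for `k < 0` or `k > n`. -/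
def aExt (n : ℕ) (k : ℤ) : ℤ :=
  if 0 ≤ k ∧ k ≤ (n : ℤ) then
    if n = 0 then 1
    else ((2 * n - k.toNat + 1).choose (2 * n - 2 * k.toNat + 1) : ℤ)
      + ((2 * n - k.toNat).choose (2 * n - 2 * k.toNat + 1) : ℤ)
  else 0

/-- The signed Catalan number `b_s = ((−1)^s/(s+2))·C(2s+2, s+1)` (an integer;
the division is exact). -/
def bCat (s : ℕ) : ℤ := (-1) ^ s * ((((2 * s + 2).choose (s + 1)) / (s + 2) : ℕ) : ℤ)

/-- `F(n,m) = Σ_{j=0}^{n} a_{n−j}^{(n)}·b_{m+j}`. -/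
def Ffun (n m : ℕ) : ℤ := ∑ j ∈ Finset.range (n + 1), aExt n ((n : ℤ) - j) * bCat (m + j)

/-- `H_k^{(n)} = Σ_{j=0}^{k} a_j^{(n)}·F(n−1, n+k−2−j) − Σ_{j=0}^{k−2} a_j^{(n−1)}·F(n, n+k−3−j)`. -/
def Hfun (n k : ℕ) : ℤ :=
  (∑ j ∈ Finset.range (k + 1), aExt n j * Ffun (n - 1) (n + k - 2 - j)) -
  (∑ j ∈ Finset.range (k - 1), aExt (n - 1) j * Ffun n (n + k - 3 - j))

-- basic aExt lemmas
lemma aExt_neg {n : ℕ} {k : ℤ} (h : k < 0) : aExt n k = 0 := by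
  simp [aExt]; intro h'; omega

lemma aExt_gt {n : ℕ} {k : ℤ} (h : (n : ℤ) < k) : aExt n k = 0 := by
  simp [aExt]; intro h'; omega

lemma aExt_zero (n : ℕ) : aExt n 0 = 1 := by
  rcases Nat.eq_zero_or_pos n with h | h
  · subst h; simp [aExt]
  · simp only [aExt, if_pos (⟨le_refl _, by positivity⟩ : (0:ℤ) ≤ 0 ∧ (0:ℤ) ≤ (n:ℤ)),
      if_neg (by omega : ¬ n = 0), Int.toNat_zero, Nat.sub_zero]
    rw [show 2 * n - 2 * 0 + 1 = 2 * n + 1 by omega, Nat.choose_self,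
      Nat.choose_eq_zero_of_lt (by omega)]
    norm_num

/-- closed form used in manipulations -/
def gI (n k : ℕ) : ℕ := (2 * n - k + 1).choose k + (2 * n - k).choose (k - 1)

lemma aExt_eq_gI {n k : ℕ} (hn : 1 ≤ n) (hk : 1 ≤ k) : aExt n k = (gI n k : ℤ) := by
  by_cases h : k ≤ n
  · have h1 : (0:ℤ) ≤ (k:ℤ) ∧ (k:ℤ) ≤ (n:ℤ) := ⟨by positivity, by exact_mod_cast h⟩
    simp only [aExt, if_pos h1, if_neg (by omega : ¬ n = 0), Int.toNat_natCast, gI]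
    have e1 : 2 * n - 2 * k + 1 = (2 * n - k + 1) - k := by omega
    have e2 : 2 * n - 2 * k + 1 = (2 * n - k) - (k - 1) := by omega
    rw [e1]
    nth_rewrite 2 [show 2 * n - k + 1 - k = 2 * n - k - (k - 1) by omega]
    rw [Nat.choose_symm (by omega), Nat.choose_symm (by omega)]
    push_cast; ring
  · rw [aExt_gt (by exact_mod_cast (by omega : n < k))]
    have h1 : (2 * n - k + 1).choose k = 0 := Nat.choose_eq_zero_of_lt (by omega)
    have h2 : (2 * n - k).choose (k - 1) = 0 := Nat.choose_eq_zero_of_lt (by omega)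
    simp [gI, h1, h2]

lemma pascal4 (a j : ℕ) :
    (a+3).choose (j+3) + a.choose j
      = (a+1).choose (j+3) + a.choose (j+2) + (a+2).choose (j+2) + (a+1).choose (j+1) := by
  simp [Nat.choose_succ_succ]
  ring

lemma gI_one {n : ℕ} (hn : 1 ≤ n) : gI n 1 = 2 * n + 1 := by
  simp [gI]; omega

lemma aRec {n : ℕ} (hn : 2 ≤ n) (k : ℤ) :
    aExt n k = aExt (n-1) k + 2 * aExt (n-1) (k-1) - aExt (n-2) (k-2) := by
  rcases lt_trichotomy k 0 with hk | hk | hk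
  · rw [aExt_neg hk, aExt_neg hk, aExt_neg (by omega), aExt_neg (by omega)]; ring
  · subst hk
    rw [aExt_zero, aExt_zero, aExt_neg (by omega), aExt_neg (by omega)]; ring
  -- k ≥ 1 : k = (k' : ℕ)
  obtain ⟨k', rfl⟩ : ∃ k' : ℕ, k = (k' : ℤ) := ⟨k.toNat, by omega⟩
  have hk1 : 1 ≤ k' := by exact_mod_cast hk
  rcases Nat.lt_or_ge n k' with hgt | hle
  · -- k' > n : everything 0
    rw [aExt_gt (by exact_mod_cast hgt), aExt_gt (by push_cast; omega),
      aExt_gt (by push_cast; omega), aExt_gt (by push_cast; omega)]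
    ring
  -- 1 ≤ k' ≤ n
  have c1 : ((k':ℤ) - 1) = ((k' - 1 : ℕ) : ℤ) := by push_cast [hk1]; ring
  have c2 : ((k':ℤ) - 2) = ((k' - 2 : ℕ) : ℤ) ∨ k' = 1 := by
    rcases Nat.lt_or_ge k' 2 with h | h
    · right; omega
    · left; push_cast [h]; ring
  match k', hk1, hle with
  | 1, _, hle =>
    rw [aExt_eq_gI (by omega) (by omega), aExt_eq_gI (by omega) (by omega),
      show ((1:ℕ):ℤ) - 1 = (0:ℤ) by norm_num, aExt_zero,
      show ((1:ℕ):ℤ) - 2 = (-1 : ℤ) by norm_num, aExt_neg (by omega),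
      gI_one (by omega), gI_one (by omega)]
    push_cast
    omega
  | 2, _, hle =>
    rw [aExt_eq_gI (by omega) (by omega), aExt_eq_gI (by omega) (by omega),
      show ((2:ℕ):ℤ) - 1 = ((1:ℕ):ℤ) by norm_num, aExt_eq_gI (by omega) (by omega),
      show ((2:ℕ):ℤ) - 2 = (0:ℤ) by norm_num, aExt_zero, gI_one (by omega)]
    -- ℕ identity: gI n 2 + 1 = gI (n-1) 2 + 2*(2*(n-1)+1)
    have key : gI n 2 + 1 = gI (n-1) 2 + (2 * (2 * (n-1) + 1)) := by
      obtain ⟨a, ha⟩ : ∃ a, n = a + 2 := ⟨n - 2, by omega⟩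
      subst ha
      simp only [gI, show 2*(a+2) - 2 + 1 = 2*a+3 by omega, show 2*(a+2)-2 = 2*a+2 by omega,
        show (2:ℕ)-1 = 1 by omega, show a+2-1 = a+1 by omega,
        show 2*(a+1)-2+1 = 2*a+1 by omega, show 2*(a+1)-2 = 2*a by omega]
      rw [show 2*a+3 = (2*a+1)+1+1 by ring, Nat.choose_succ_succ (2*a+1+1) 1,
        Nat.choose_succ_succ (2*a+1) 1, Nat.choose_succ_succ (2*a+1) 0,
        Nat.choose_succ_succ (2*a) 0]
      simp [Nat.choose_one_right]
      omega
    push_cast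
    omega
  | (j+3), _, hle =>
    rw [aExt_eq_gI (by omega) (by omega), aExt_eq_gI (by omega) (by omega),
      show ((j+3:ℕ):ℤ) - 1 = ((j+2:ℕ):ℤ) by push_cast; ring,
      aExt_eq_gI (by omega) (by omega),
      show ((j+3:ℕ):ℤ) - 2 = ((j+1:ℕ):ℤ) by push_cast; ring,
      aExt_eq_gI (by omega) (by omega)]
    obtain ⟨a, ha⟩ : ∃ a, 2 * n - (j+3) = a + 2 := ⟨2*n - j - 5, by omega⟩
    have e1 : gI n (j+3) = (a+3).choose (j+3) + (a+2).choose (j+2) := by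
      simp only [gI, show 2*n-(j+3)+1 = a+3 by omega, ha, show j+3-1 = j+2 by omega]
    have e2 : gI (n-1) (j+3) = (a+1).choose (j+3) + a.choose (j+2) := by
      simp only [gI, show 2*(n-1)-(j+3)+1 = a+1 by omega, show 2*(n-1)-(j+3) = a by omega,
        show j+3-1 = j+2 by omega]
    have e3 : gI (n-1) (j+2) = (a+2).choose (j+2) + (a+1).choose (j+1) := by
      simp only [gI, show 2*(n-1)-(j+2)+1 = a+2 by omega, show 2*(n-1)-(j+2) = a+1 by omega,
        show j+2-1 = j+1 by omega]
    have e4 : gI (n-2) (j+1) = (a+1).choose (j+1) + a.choose j := by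
      simp only [gI, show 2*(n-2)-(j+1)+1 = a+1 by omega, show 2*(n-2)-(j+1) = a by omega,
        show j+1-1 = j by omega]
    rw [e1, e2, e3, e4]
    have := pascal4 a j
    push_cast
    push_cast at this
    linarith

lemma FRec {n : ℕ} (hn : 2 ≤ n) (m : ℕ) :
    Ffun n m = Ffun (n-1) (m+1) + 2 * Ffun (n-1) m - Ffun (n-2) m := by
  have expand : Ffun n m =
      (∑ j ∈ range (n+1), aExt (n-1) ((n:ℤ) - j) * bCat (m+j))
      + 2 * (∑ j ∈ range (n+1), aExt (n-1) ((n:ℤ) - j - 1) * bCat (m+j))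
      - (∑ j ∈ range (n+1), aExt (n-2) ((n:ℤ) - j - 2) * bCat (m+j)) := by
    rw [Ffun, Finset.mul_sum, ← Finset.sum_add_distrib, ← Finset.sum_sub_distrib]
    exact Finset.sum_congr rfl (fun j _ => by rw [aRec hn ((n:ℤ) - j)]; ring)
  have hA : (∑ j ∈ range (n+1), aExt (n-1) ((n:ℤ) - j) * bCat (m+j)) = Ffun (n-1) (m+1) := by
    rw [Finset.sum_range_succ']
    rw [show aExt (n-1) ((n:ℤ) - ((0:ℕ):ℤ)) * bCat (m+0) = 0 by
      rw [aExt_gt (by omega)]; ring]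
    rw [Ffun, show n - 1 + 1 = n by omega, add_zero]
    apply Finset.sum_congr rfl
    intro i _
    rw [show ((n-1:ℕ):ℤ) - (i:ℕ) = (n:ℤ) - ((i:ℕ)+1 : ℕ) by push_cast; omega,
      show m + 1 + i = m + (i+1) by omega]
  have hB : (∑ j ∈ range (n+1), aExt (n-1) ((n:ℤ) - j - 1) * bCat (m+j)) = Ffun (n-1) m := by
    rw [Finset.sum_range_succ]
    rw [show aExt (n-1) ((n:ℤ) - (n:ℕ) - 1) * bCat (m+n) = 0 by
      rw [aExt_neg (by omega)]; ring]
    rw [Ffun, show n - 1 + 1 = n by omega, add_zero]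
    apply Finset.sum_congr rfl
    intro i _
    rw [show ((n-1:ℕ):ℤ) - (i:ℕ) = (n:ℤ) - (i:ℕ) - 1 by omega]
  have hC : (∑ j ∈ range (n+1), aExt (n-2) ((n:ℤ) - j - 2) * bCat (m+j)) = Ffun (n-2) m := by
    rw [Ffun, show n - 2 + 1 = n - 1 by omega]
    rw [← Finset.sum_subset (Finset.range_subset_range.2 (by omega : n-1 ≤ n+1))]
    · apply Finset.sum_congr rfl
      intro i _
      rw [show ((n-2:ℕ):ℤ) - (i:ℕ) = (n:ℤ) - (i:ℕ) - 2 by omega]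
    · intro j hj hj2
      simp only [mem_range] at hj hj2
      rw [aExt_neg (by omega)]; ring
  rw [expand, hA, hB, hC]

lemma bCat_eq (s : ℕ) : bCat s = (-1) ^ s * (catalan (s+1) : ℤ) := by
  rw [bCat, show 2 * s + 2 = 2 * (s + 1) by ring]
  rw [show ((2 * (s+1)).choose (s+1)) = Nat.centralBinom (s+1) from rfl]
  rw [← Nat.succ_eq_add_one, ← catalan_eq_centralBinom_div]

/-- absorption in ℤ -/
lemma absZ (N k : ℕ) :
    ((k:ℤ)+1) * (N.choose (k+1)) = ((N:ℤ) - k) * (N.choose k) := by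
  have h := Nat.choose_succ_right_eq N k
  by_cases hk : k ≤ N
  · have h2 : ((N.choose (k+1) * (k+1) : ℕ) : ℤ) = ((N.choose k * (N - k) : ℕ) : ℤ) := by
      exact_mod_cast h
    push_cast [Nat.cast_sub hk] at h2
    linarith
  · rw [Nat.choose_eq_zero_of_lt (by omega), Nat.choose_eq_zero_of_lt (by omega)]
    ring

def Rfun (n m : ℕ) : ℤ :=
  (-1) ^ (m+n+1) * ((n:ℤ) * ((2*m+2).choose (m+n+1)) - ((n:ℤ)+1) * ((2*m+2).choose (m+n+2)))

lemma cat_mul (m : ℕ) : ((m:ℤ)+2) * (catalan (m+1) : ℤ) = ((2*m+2).choose (m+1) : ℤ) := by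
  have h := succ_mul_catalan_eq_centralBinom (m+1)
  have : ((m+1+1) * catalan (m+1) : ℕ) = ((2*(m+1)).choose (m+1) : ℕ) := h
  rw [show 2*(m+1) = 2*m+2 by ring] at this
  exact_mod_cast this

lemma pascal2 (a b : ℕ) :
    (a+2).choose (b+2) = a.choose b + 2 * a.choose (b+1) + a.choose (b+2) := by
  simp [Nat.choose_succ_succ]
  ring

lemma Fclosed (n m : ℕ) : ((m:ℤ)+1) * Ffun n m = Rfun n m := by
  induction n using Nat.strong_induction_on generalizing m with
  | _ n ih =>
    match n with
    | 0 =>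
      have hF : Ffun 0 m = bCat m := by
        simp [Ffun, aExt_zero]
      rw [hF, bCat_eq, Rfun]
      -- (m+1) * (-1)^m * catalan (m+1) = (-1)^(m+1) * (0 - 1 * C(2m+2, m+2))
      have a1 : ((m:ℤ)+1+1) * ((2*m+2).choose (m+2)) = ((2*m+2:ℤ) - (m+1)) * ((2*m+2).choose (m+1)) := by
        exact_mod_cast absZ (2*m+2) (m+1)
      have h1 := cat_mul m
      -- goal: (m+1) * ((-1)^m * catalan (m+1)) = (-1)^(m+0+1) * (0 - 1*C(2m+2,m+2))
      have key : ((m:ℤ)+1) * (catalan (m+1) : ℤ) = ((2*m+2).choose (m+2) : ℤ) := by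
        have h2 : ((m:ℤ)+2) * (((m:ℤ)+1) * (catalan (m+1) : ℤ)) = ((m:ℤ)+2) * ((2*m+2).choose (m+2) : ℤ) := by
          linear_combination ((m:ℤ)+1) * h1 - a1
        exact mul_left_cancel₀ (by positivity) h2
      simp only [Nat.add_zero, Nat.cast_zero]
      rw [pow_succ]
      push_cast
      linear_combination ((-1:ℤ))^m * key
    | 1 =>
      have ha1 : aExt 1 1 = 3 := by norm_num [aExt]
      have hF : Ffun 1 m = 3 * bCat m + bCat (m+1) := by
        rw [Ffun]
        rw [Finset.sum_range_succ, Finset.sum_range_succ, Finset.range_zero, Finset.sum_empty]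
        norm_num [ha1, aExt_zero]
      have h1 := cat_mul m
      have h2 : ((m:ℤ)+3) * (catalan (m+2) : ℤ)
          = ((2*m+2).choose m : ℤ) + 2 * ((2*m+2).choose (m+1) : ℤ) + ((2*m+2).choose (m+2) : ℤ) := by
        have hc := cat_mul (m+1)
        have hp : ((2*(m+1)+2).choose (m+2) : ℤ)
            = ((2*m+2).choose m : ℤ) + 2 * ((2*m+2).choose (m+1) : ℤ) + ((2*m+2).choose (m+2) : ℤ) := by
          have := pascal2 (2*m+2) m
          rw [show 2*(m+1)+2 = 2*m+2+2 by ring]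
          exact_mod_cast this
        push_cast at hc
        linarith [hp, hc]
      have a0 : ((m:ℤ)+1) * ((2*m+2).choose (m+1)) = ((m:ℤ)+2) * ((2*m+2).choose m) := by
        have := absZ (2*m+2) m
        push_cast at this ⊢
        linarith
      have a1 : ((m:ℤ)+2) * ((2*m+2).choose (m+2)) = ((m:ℤ)+1) * ((2*m+2).choose (m+1)) := by
        have := absZ (2*m+2) (m+1)
        push_cast at this ⊢
        linarith
      have a2 : ((m:ℤ)+3) * ((2*m+2).choose (m+3)) = (m:ℤ) * ((2*m+2).choose (m+2)) := by
        have := absZ (2*m+2) (m+2)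
        push_cast at this ⊢
        linarith
      have bigG : ((m:ℤ)+2) * (((m:ℤ)+3) * (((m:ℤ)+1) * (3 * (catalan (m+1) : ℤ) - (catalan (m+2) : ℤ))))
          = ((m:ℤ)+2) * (((m:ℤ)+3) * (((2*m+2).choose (m+2) : ℤ) - 2 * ((2*m+2).choose (m+3) : ℤ))) := by
        linear_combination (3*((m:ℤ)+1)*((m:ℤ)+3))*h1 - (((m:ℤ)+1)*((m:ℤ)+2))*h2
          + (2*((m:ℤ)+2))*a2 - 4*a1 + ((m:ℤ)+1)*a0
      have T : ((m:ℤ)+1) * (3 * (catalan (m+1) : ℤ) - (catalan (m+2) : ℤ))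
          = ((2*m+2).choose (m+2) : ℤ) - 2 * ((2*m+2).choose (m+3) : ℤ) := by
        have := mul_left_cancel₀ (by positivity : ((m:ℤ)+2) ≠ 0) bigG
        exact mul_left_cancel₀ (by positivity : ((m:ℤ)+3) ≠ 0) this
      rw [hF, bCat_eq, bCat_eq, Rfun]
      have hp2 : ((-1:ℤ))^(m+1) = -(-1)^m := by rw [pow_succ]; ring
      have hp3 : ((-1:ℤ))^(m+1+1) = (-1)^m := by rw [pow_succ, pow_succ]; ring
      rw [hp2, hp3]
      push_cast
      linear_combination ((-1:ℤ))^m * T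
    | (N+2) =>
      have hrec := FRec (show 2 ≤ N+2 by omega) m
      simp only [show N+2-1 = N+1 by omega, show N+2-2 = N by omega] at hrec
      have i1 := ih (N+1) (by omega) (m+1)
      have i2 := ih (N+1) (by omega) m
      have i3 := ih N (by omega) m
      -- Rrec
      have a1 : ((m:ℤ)+(N:ℤ)+4) * ((2*m+2).choose (m+N+4)) = ((m:ℤ) - N - 1) * ((2*m+2).choose (m+N+3)) := by
        have := absZ (2*m+2) (m+N+3)
        push_cast at this ⊢
        linear_combination this
      have a3 : ((m:ℤ)+(N:ℤ)+2) * ((2*m+2).choose (m+N+2)) = ((m:ℤ) - N + 1) * ((2*m+2).choose (m+N+1)) := by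
        have := absZ (2*m+2) (m+N+1)
        push_cast at this ⊢
        linear_combination this
      have p1 : (((2*(m+1)+2).choose (m+N+3) : ℕ) : ℤ)
          = ((2*m+2).choose (m+N+1) : ℤ) + 2 * ((2*m+2).choose (m+N+2) : ℤ) + ((2*m+2).choose (m+N+3) : ℤ) := by
        have := pascal2 (2*m+2) (m+N+1)
        rw [show 2*(m+1)+2 = 2*m+2+2 by ring, show m+N+3 = (m+N+1)+2 by ring]
        exact_mod_cast this
      have p2 : (((2*(m+1)+2).choose (m+N+4) : ℕ) : ℤ)
          = ((2*m+2).choose (m+N+2) : ℤ) + 2 * ((2*m+2).choose (m+N+3) : ℤ) + ((2*m+2).choose (m+N+4) : ℤ) := by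
        have := pascal2 (2*m+2) (m+N+2)
        rw [show 2*(m+1)+2 = 2*m+2+2 by ring, show m+N+4 = (m+N+2)+2 by ring]
        exact_mod_cast this
      have rrec : ((m:ℤ)+2) * Rfun (N+2) m
          = ((m:ℤ)+1) * Rfun (N+1) (m+1) + 2*((m:ℤ)+2) * Rfun (N+1) m - ((m:ℤ)+2) * Rfun N m := by
        simp only [Rfun]
        rw [show (m+1)+(N+1)+1 = m+N+3 by ring, show (m+1)+(N+1)+2 = m+N+4 by ring,
          show m+(N+2)+1 = m+N+3 by ring, show m+(N+2)+2 = m+N+4 by ring,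
          show m+(N+1)+1 = m+N+2 by ring, show m+(N+1)+2 = m+N+3 by ring,
          show m+N+1 = m+N+1 by ring, p1, p2]
        have hp3 : ((-1:ℤ))^(m+N+3) = (-1)^(m+N+1) := by
          rw [show m+N+3 = (m+N+1)+2 by ring, pow_add]; norm_num
        have hp2 : ((-1:ℤ))^(m+N+2) = -(-1)^(m+N+1) := by
          rw [show m+N+2 = (m+N+1)+1 by ring, pow_succ]; ring
        rw [hp3, hp2]
        push_cast
        linear_combination ((-1:ℤ))^(m+N+1) * a3 - ((-1:ℤ))^(m+N+1) * a1
      have big : ((m:ℤ)+2) * (((m:ℤ)+1) * Ffun (N+2) m) = ((m:ℤ)+2) * Rfun (N+2) m := by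
        rw [hrec, rrec]
        push_cast at i1
        linear_combination ((m:ℤ)+1)*i1 + 2*((m:ℤ)+2)*i2 - ((m:ℤ)+2)*i3
      exact mul_left_cancel₀ (by positivity : ((m:ℤ)+2) ≠ 0) big

lemma Fzero {n m : ℕ} (h : m + 2 ≤ n) : Ffun n m = 0 := by
  have hc := Fclosed n m
  rw [Rfun, Nat.choose_eq_zero_of_lt (by omega), Nat.choose_eq_zero_of_lt (by omega)] at hc
  simp only [Nat.cast_zero, mul_zero, sub_zero, zero_sub, mul_neg, neg_zero] at hc
  have := mul_eq_zero.mp (by linarith [hc] : ((m:ℤ)+1) * Ffun n m = 0)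
  rcases this with h1 | h1
  · exfalso; omega
  · exact h1

/-- `bCat` with integer (possibly negative) index. -/
def zb (t : ℤ) : ℤ := if 0 ≤ t then bCat t.toNat else 0


theorem stmt_16 (n k : ℕ) (hn : 1 ≤ n) (hk : 2 ≤ k) : Hfun n k = 0 := by
  set R : Finset ℕ := Finset.range (n+k+1) with hR
  -- inner expansions
  have inner1 : ∀ j ∈ R, aExt n j * Ffun (n-1) (n+k-2-j)
      = ∑ l ∈ R, aExt n j * aExt (n-1) l * zb (2*(n:ℤ)+k-3-j-l) := by
    intro j _
    by_cases hz : aExt n j = 0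
    · simp [hz]
    have hjn : j ≤ n := by
      by_contra hc
      exact hz (aExt_gt (by exact_mod_cast (by omega : n < j)))
    have hFf : Ffun (n-1) (n+k-2-j) = ∑ l ∈ range n, aExt (n-1) l * zb (2*(n:ℤ)+k-3-j-l) := by
      rw [Ffun, show n-1+1 = n by omega]
      rw [← Finset.sum_range_reflect]
      apply Finset.sum_congr rfl
      intro l hl
      have hl' : l < n := mem_range.mp hl
      have e1 : ((n-1:ℕ):ℤ) - ((n-1-l:ℕ):ℤ) = (l:ℤ) := by omega
      have e2 : zb (2*(n:ℤ)+k-3-j-l) = bCat (n+k-2-j + (n-1-l)) := by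
        rw [zb, if_pos (by omega)]
        congr 1
        omega
      rw [e1, e2]
    rw [hFf, Finset.mul_sum]
    rw [Finset.sum_subset (show range n ⊆ R by rw [hR]; exact Finset.range_subset_range.2 (by omega))]
    · apply Finset.sum_congr rfl; intro l _; ring
    · intro l hl hl2
      simp only [hR, mem_range] at hl hl2
      rw [aExt_gt (by omega : ((n-1:ℕ):ℤ) < (l:ℤ))]
      ring
  have inner2 : ∀ j ∈ R, aExt (n-1) j * Ffun n (n+k-3-j)
      = ∑ l ∈ R, aExt (n-1) j * aExt n l * zb (2*(n:ℤ)+k-3-j-l) := by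
    intro j _
    by_cases hz : aExt (n-1) j = 0
    · simp [hz]
    have hjn : j ≤ n-1 := by
      by_contra hc
      exact hz (aExt_gt (by omega : ((n-1:ℕ):ℤ) < (j:ℤ)))
    have hFf : Ffun n (n+k-3-j) = ∑ l ∈ range (n+1), aExt n l * zb (2*(n:ℤ)+k-3-j-l) := by
      rw [Ffun]
      rw [← Finset.sum_range_reflect]
      apply Finset.sum_congr rfl
      intro l hl
      have hl' : l < n+1 := mem_range.mp hl
      have e1 : ((n:ℕ):ℤ) - ((n+1-1-l:ℕ):ℤ) = (l:ℤ) := by omega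
      have e2 : zb (2*(n:ℤ)+k-3-j-l) = bCat (n+k-3-j + (n+1-1-l)) := by
        rw [zb, if_pos (by omega)]
        congr 1
        omega
      rw [e1, e2]
    rw [hFf, Finset.mul_sum]
    rw [Finset.sum_subset (show range (n+1) ⊆ R by rw [hR]; exact Finset.range_subset_range.2 (by omega))]
    · apply Finset.sum_congr rfl; intro l _; ring
    · intro l hl hl2
      simp only [hR, mem_range] at hl hl2
      rw [aExt_gt (by omega : ((n:ℕ):ℤ) < (l:ℤ))]
      ring
  have ext1 : (∑ j ∈ Finset.range (k+1), aExt n j * Ffun (n-1) (n+k-2-j))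
      = ∑ j ∈ R, aExt n j * Ffun (n-1) (n+k-2-j) := by
    apply Finset.sum_subset (by rw [hR]; exact Finset.range_subset_range.2 (by omega))
    intro j hj hj2
    simp only [hR, mem_range] at hj hj2
    by_cases hc : (n:ℤ) < j
    · rw [aExt_gt hc]; ring
    · rw [Fzero (show (n+k-2-j) + 2 ≤ n-1 by omega)]; ring
  have ext2 : (∑ j ∈ Finset.range (k-1), aExt (n-1) j * Ffun n (n+k-3-j))
      = ∑ j ∈ R, aExt (n-1) j * Ffun n (n+k-3-j) := by
    apply Finset.sum_subset (by rw [hR]; exact Finset.range_subset_range.2 (by omega))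
    intro j hj hj2
    simp only [hR, mem_range] at hj hj2
    by_cases hc : ((n-1:ℕ):ℤ) < j
    · rw [aExt_gt hc]; ring
    · rw [Fzero (show (n+k-3-j) + 2 ≤ n by omega)]; ring
  have swap : (∑ j ∈ R, ∑ l ∈ R, aExt n j * aExt (n-1) l * zb (2*(n:ℤ)+k-3-j-l))
      = ∑ j ∈ R, ∑ l ∈ R, aExt (n-1) j * aExt n l * zb (2*(n:ℤ)+k-3-j-l) := by
    rw [Finset.sum_comm]
    apply Finset.sum_congr rfl
    intro j _
    apply Finset.sum_congr rfl
    intro l _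
    rw [show 2*(n:ℤ)+k-3-l-j = 2*(n:ℤ)+k-3-j-l by ring]
    ring
  rw [Hfun, ext1, ext2, Finset.sum_congr rfl inner1, Finset.sum_congr rfl inner2, swap, sub_self]
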